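/- Let D be the deterministic NEC automaton on {0,1}^{ℤ²}, let ε ∈ (0,1], and let μ be any probability measure on {0,1}^{ℤ²} invariant for the stochastic automaton N_ε D. Then for every integer L ≥ 1, μ(1_{S_{(−L,−L),L}}) ≥ μ(1_{SP_{(0,0),L}}) ≥ ε^{3(12L+1)}, where SP_{(0,0),L} = {(i,0) : −8L ≤ i ≤ 4L} ∪ {(0,j) : −8L ≤ j ≤ 4L} ∪ {(i,j) : i+j = 0, −6L ≤ i ≤ 6L}. -/

import Mathlib

open MeasureTheory ENNReal

namespace CAPaper

/-- Majority of three Boolean values: `1` iff at least two of them are `1`. -/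
def major (a b c : Bool) : Bool := (a && b) || ((a && c) || (b && c))

/-- The deterministic NEC (North-East-Center) automaton on `{0,1}^{ℤ²}`. -/
def Dnec (x : ℤ × ℤ → Bool) : ℤ × ℤ → Bool :=
  fun p => major (x (p.1, p.2 + 1)) (x (p.1 + 1, p.2)) (x (p.1, p.2))

/-- The deterministic NSMM (North-South maximum of minima) automaton on `{0,1}^{ℤ²}`. -/
def Dnsmm (x : ℤ × ℤ → Bool) : ℤ × ℤ → Bool :=
  fun p => max (min (x (p.1, p.2)) (x (p.1 + 1, p.2)))
               (min (x (p.1, p.2 + 1)) (x (p.1 + 1, p.2 + 1)))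

/-- Probability that, after the one-sided noise with parameter `ε` is applied to a
configuration whose value at a given site is `xi`, that site carries the value `b`. -/
noncomputable def noiseProb (ε : ℝ) (xi b : Bool) : ℝ≥0∞ :=
  if xi then (if b then 1 else 0)
  else (if b then ENNReal.ofReal ε else ENNReal.ofReal (1 - ε))

/-- `ν` is the result of one step of the stochastic automaton `N_ε D` applied to `μ`
(first apply `D`, then independent one-sided noise at every site); since the noise measure
is a product measure, this is equivalent to specifying all cylinder probabilities of `ν`. -/
def IsStep {ι : Type*} (ε : ℝ) (D : (ι → Bool) → (ι → Bool)) (μ ν : Measure (ι → Bool)) : Prop :=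
  ∀ (Λ : Finset ι) (b : ι → Bool),
    ν {y | ∀ i ∈ Λ, y i = b i} = ∫⁻ x, ∏ i ∈ Λ, noiseProb ε (D x i) (b i) ∂μ

/-- `μ` is invariant for the stochastic automaton `N_ε D`. -/
def Invariant {ι : Type*} (ε : ℝ) (D : (ι → Bool) → (ι → Bool)) (μ : Measure (ι → Bool)) : Prop :=
  IsStep ε D μ μ

/-- The cylinder event: all sites of `Λ` carry the value 1. -/
def ones {ι : Type*} (Λ : Set ι) : Set (ι → Bool) := {x | ∀ i ∈ Λ, x i = true}

/-- The finite spider `SP_{(0,0),L}` of Example 1. -/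
def SP (L : ℕ) : Set (ℤ × ℤ) :=
  {p | p.2 = 0 ∧ -8 * (L : ℤ) ≤ p.1 ∧ p.1 ≤ 4 * L} ∪
  {p | p.1 = 0 ∧ -8 * (L : ℤ) ≤ p.2 ∧ p.2 ≤ 4 * L} ∪
  {p | p.1 + p.2 = 0 ∧ -6 * (L : ℤ) ≤ p.1 ∧ p.1 ≤ 6 * L}

/-! ### Auxiliary material for the proof of Statement 12 -/

/-- A finite-cylinder event is measurable. -/
lemma measurable_ones {ι : Type*} (Λ : Finset ι) :
    MeasurableSet (ones (↑Λ : Set ι)) := by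
  have h : ones (↑Λ : Set ι) = ⋂ i ∈ Λ, (fun x : ι → Bool => x i) ⁻¹' {true} := by
    ext x; simp [ones]
  rw [h]
  exact MeasurableSet.biInter Λ.countable_toSet
    (fun i _ => measurable_pi_apply i (measurableSet_singleton true))

/-- One step of the erosion argument at the measure level: if all-ones on `Λ'` forces the
deterministic automaton to produce all-ones on `Λ`, then for an invariant measure the
probability of all-ones on `Λ'` is at most that of all-ones on `Λ`. -/
lemma step_mono {ε : ℝ} {μ : Measure (ℤ × ℤ → Bool)} (hinv : Invariant ε Dnec μ)
    (Λ Λ' : Finset (ℤ × ℤ))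
    (h : ∀ x : ℤ × ℤ → Bool, (∀ i ∈ Λ', x i = true) → ∀ i ∈ Λ, Dnec x i = true) :
    μ (ones (↑Λ' : Set (ℤ × ℤ))) ≤ μ (ones (↑Λ : Set (ℤ × ℤ))) := by
  have hstep : μ (ones (↑Λ : Set (ℤ × ℤ)))
      = ∫⁻ x, ∏ i ∈ Λ, noiseProb ε (Dnec x i) true ∂μ := hinv Λ (fun _ => true)
  rw [hstep]
  calc μ (ones (↑Λ' : Set (ℤ × ℤ))) = ∫⁻ _ in ones (↑Λ' : Set (ℤ × ℤ)), 1 ∂μ :=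
        (setLIntegral_one _).symm
    _ = ∫⁻ x in ones (↑Λ' : Set (ℤ × ℤ)), ∏ i ∈ Λ, noiseProb ε (Dnec x i) true ∂μ := by
        apply setLIntegral_congr_fun (measurable_ones Λ')
        intro x hx; beta_reduce
        rw [Finset.prod_eq_one]
        intro i hi
        rw [h x (fun i hi' => hx i hi') i hi]
        simp [noiseProb]
    _ ≤ ∫⁻ x, ∏ i ∈ Λ, noiseProb ε (Dnec x i) true ∂μ := setLIntegral_le_lintegral _ _

/-- The shape guaranteed to be all-ones after `t` erosion steps started from the two legs:
the two (shrinking) legs together with the triangle grown in the third quadrant. -/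
def Q (L t : ℕ) (i j : ℤ) : Prop :=
  (j = 0 ∧ -8 * (L : ℤ) ≤ i ∧ i ≤ 4 * L - t) ∨
  (i = 0 ∧ -8 * (L : ℤ) ≤ j ∧ j ≤ 4 * L - t) ∨
  (-8 * (L : ℤ) ≤ i ∧ i ≤ -1 ∧ -8 * (L : ℤ) ≤ j ∧ j ≤ -1 ∧ -(t : ℤ) - 1 ≤ i + j)

instance (L t : ℕ) (i j : ℤ) : Decidable (Q L t i j) := by unfold Q; infer_instance

/-- The shape `Q L t` as a finset. -/
noncomputable def Λfin (L t : ℕ) : Finset (ℤ × ℤ) :=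
  (Finset.Icc ((-8 * (L : ℤ), -8 * (L : ℤ)) : ℤ × ℤ) (4 * L, 4 * L)).filter
    (fun p => Q L t p.1 p.2)

lemma mem_Λfin {L t : ℕ} {p : ℤ × ℤ} : p ∈ Λfin L t ↔ Q L t p.1 p.2 := by
  constructor
  · exact fun h => (Finset.mem_filter.1 h).2
  · intro h
    refine Finset.mem_filter.2 ⟨?_, h⟩
    rw [Finset.mem_Icc, Prod.le_def, Prod.le_def]
    rcases h with h | h | h <;>
      refine ⟨⟨?_, ?_⟩, ?_, ?_⟩ <;> simp only [] <;> omega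

/-- The key combinatorial step: a configuration which is all-ones on the shape at time `t`
is mapped by the NEC automaton to a configuration which is all-ones on the shape at
time `t + 1`. -/
lemma key (L t : ℕ) (ht : t + 1 ≤ 4 * L) (x : ℤ × ℤ → Bool)
    (hx : ∀ a b : ℤ, Q L t a b → x (a, b) = true) :
    ∀ i j : ℤ, Q L (t + 1) i j → Dnec x (i, j) = true := by
  intro i j hp
  simp only [Dnec]
  have hcast : ((t + 1 : ℕ) : ℤ) = (t : ℤ) + 1 := by push_cast; ring
  rcases hp with ⟨h1, h2, h3⟩ | ⟨h1, h2, h3⟩ | ⟨h1, h2, h3, h4, h5⟩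
  · -- horizontal leg
    have hc : x (i, j) = true := hx _ _ (Or.inl ⟨h1, h2, by omega⟩)
    have hb : x (i + 1, j) = true := hx _ _ (Or.inl ⟨h1, by omega, by omega⟩)
    simp [major, hb, hc]
  · -- vertical leg
    have hc : x (i, j) = true := hx _ _ (Or.inr (Or.inl ⟨h1, h2, by omega⟩))
    have ha : x (i, j + 1) = true := hx _ _ (Or.inr (Or.inl ⟨h1, by omega, by omega⟩))
    simp [major, ha, hc]
  · -- triangle
    rw [hcast] at h5
    rcases eq_or_lt_of_le h4 with hj | hj
    · -- j = -1
      have ha : x (i, j + 1) = true := by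
        apply hx _ _ (Or.inl ⟨by omega, by omega, by omega⟩)
      rcases eq_or_lt_of_le h2 with hi | hi
      · -- i = -1
        have hb : x (i + 1, j) = true :=
          hx _ _ (Or.inr (Or.inl ⟨by omega, by omega, by omega⟩))
        simp [major, ha, hb]
      · by_cases hsum : -(t : ℤ) - 1 ≤ i + j
        · have hc : x (i, j) = true :=
            hx _ _ (Or.inr (Or.inr ⟨h1, h2, h3, by omega, hsum⟩))
          simp [major, ha, hc]
        · have hb : x (i + 1, j) = true :=
            hx _ _ (Or.inr (Or.inr ⟨by omega, by omega, by omega, by omega, by omega⟩))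
          simp [major, ha, hb]
    · -- j ≤ -2
      have ha : x (i, j + 1) = true :=
        hx _ _ (Or.inr (Or.inr ⟨h1, h2, by omega, by omega, by omega⟩))
      rcases eq_or_lt_of_le h2 with hi | hi
      · have hb : x (i + 1, j) = true :=
          hx _ _ (Or.inr (Or.inl ⟨by omega, by omega, by omega⟩))
        simp [major, ha, hb]
      · by_cases hsum : -(t : ℤ) - 1 ≤ i + j
        · have hc : x (i, j) = true :=
            hx _ _ (Or.inr (Or.inr ⟨h1, h2, h3, by omega, hsum⟩))
          simp [major, ha, hc]
        · have hb : x (i + 1, j) = true :=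
            hx _ _ (Or.inr (Or.inr ⟨by omega, by omega, by omega, by omega, by omega⟩))
          simp [major, ha, hb]

/-- The shape at time `0` is contained in the spider. -/
lemma Λfin_zero_subset (L : ℕ) : (↑(Λfin L 0) : Set (ℤ × ℤ)) ⊆ SP L := by
  intro p hp
  have h : Q L 0 p.1 p.2 := mem_Λfin.1 hp
  simp only [SP, Set.mem_union, Set.mem_setOf_eq]
  rcases h with h | h | h
  · exact Or.inl (Or.inl ⟨h.1, h.2.1, by omega⟩)
  · exact Or.inl (Or.inr ⟨h.1, h.2.1, by omega⟩)
  · exact absurd h (by omega)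

/-- Iterated erosion: the spider probability is dominated by the shape probability. -/
lemma chain {ε : ℝ} {μ : Measure (ℤ × ℤ → Bool)} (hinv : Invariant ε Dnec μ) (L : ℕ) :
    ∀ t : ℕ, t + 1 ≤ 4 * L →
      μ (ones (SP L)) ≤ μ (ones (↑(Λfin L t) : Set (ℤ × ℤ))) := by
  intro t
  induction t with
  | zero =>
    intro _
    exact measure_mono (fun x hx i hi => hx i (Λfin_zero_subset L hi))
  | succ t ih =>
    intro ht
    refine le_trans (ih (by omega)) ?_
    refine step_mono hinv (Λfin L (t + 1)) (Λfin L t) ?_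
    intro x hx i hi
    have hk := key L t (by omega) x (fun a b hq => hx (a, b) (mem_Λfin.2 hq)) i.1 i.2 (mem_Λfin.1 hi)
    exact hk

/-- The Euclidean ball of radius `L` around `(-L, -L)` is inside the shape at time `4L - 1`. -/
lemma ball_subset (L : ℕ) (hL : 1 ≤ L) (p : ℤ × ℤ)
    (hp : Real.sqrt (((p.1 : ℝ) + L) ^ 2 + ((p.2 : ℝ) + L) ^ 2) ≤ L) :
    Q L (4 * L - 1) p.1 p.2 := by
  obtain ⟨a, b⟩ := p
  simp only at hp ⊢
  have h0 : (0:ℝ) ≤ ((a : ℝ) + L) ^ 2 + ((b : ℝ) + L) ^ 2 := by positivity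
  have hR : ((a : ℝ) + L) ^ 2 + ((b : ℝ) + L) ^ 2 ≤ (L : ℝ) ^ 2 := by
    nlinarith [Real.sq_sqrt h0, Real.sqrt_nonneg (((a : ℝ) + L) ^ 2 + ((b : ℝ) + L) ^ 2)]
  have hZ : (a + L) ^ 2 + (b + L) ^ 2 ≤ (L : ℤ) ^ 2 := by exact_mod_cast hR
  have hl : (1 : ℤ) ≤ (L : ℤ) := by exact_mod_cast hL
  have hT : ((4 * L - 1 : ℕ) : ℤ) = 4 * (L : ℤ) - 1 := by omega
  have ha2 : -2 * (L:ℤ) ≤ a ∧ a ≤ 0 := by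
    constructor <;> nlinarith [sq_nonneg (a + L), sq_nonneg (b + L)]
  have hb2 : -2 * (L:ℤ) ≤ b ∧ b ≤ 0 := by
    constructor <;> nlinarith [sq_nonneg (a + L), sq_nonneg (b + L)]
  unfold Q
  rw [hT]
  by_cases hb0 : b = 0
  · subst hb0
    have : (a + L) ^ 2 ≤ 0 := by nlinarith
    have haL : a = -(L:ℤ) := by nlinarith [sq_nonneg (a + L)]
    left; omega
  · by_cases ha0 : a = 0
    · subst ha0
      have : (b + L) ^ 2 ≤ 0 := by nlinarith
      have hbL : b = -(L:ℤ) := by nlinarith [sq_nonneg (b + L)]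
      right; left; omega
    · right; right
      refine ⟨by omega, by omega, by omega, by omega, by nlinarith⟩

/-- The spider as a predicate on coordinates. -/
def SPmem (L : ℕ) (i j : ℤ) : Prop :=
  (j = 0 ∧ -8 * (L : ℤ) ≤ i ∧ i ≤ 4 * L) ∨
  (i = 0 ∧ -8 * (L : ℤ) ≤ j ∧ j ≤ 4 * L) ∨
  (i + j = 0 ∧ -6 * (L : ℤ) ≤ i ∧ i ≤ 6 * L)

instance (L : ℕ) (i j : ℤ) : Decidable (SPmem L i j) := by unfold SPmem; infer_instance

/-- The spider as a finset. -/
noncomputable def SPfin (L : ℕ) : Finset (ℤ × ℤ) :=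
  (Finset.Icc ((-8 * (L : ℤ), -8 * (L : ℤ)) : ℤ × ℤ) (8 * L, 8 * L)).filter
    (fun p => SPmem L p.1 p.2)

lemma coe_SPfin (L : ℕ) : (↑(SPfin L) : Set (ℤ × ℤ)) = SP L := by
  ext p
  rw [Finset.mem_coe, SPfin, Finset.mem_filter]
  simp only [SPfin, Finset.coe_filter, Set.mem_setOf_eq, Finset.mem_Icc, Prod.le_def,
    SP, Set.mem_union, Set.mem_setOf_eq, SPmem]
  constructor
  · rintro ⟨-, h⟩; tauto
  · intro h
    refine ⟨⟨⟨?_, ?_⟩, ?_, ?_⟩, by tauto⟩ <;> rcases h with (h | h) | h <;> omega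

lemma card_SPfin (L : ℕ) : (SPfin L).card ≤ 3 * (12 * L + 1) := by
  have hsub : SPfin L ⊆
      ((Finset.Icc (-8 * (L : ℤ)) (4 * L)).image (fun i => ((i, 0) : ℤ × ℤ)) ∪
       ((Finset.Icc (-8 * (L : ℤ)) (4 * L)).image (fun j => ((0, j) : ℤ × ℤ)) ∪
        (Finset.Icc (-6 * (L : ℤ)) (6 * L)).image (fun i => ((i, -i) : ℤ × ℤ)))) := by
    intro p hp
    have h : SPmem L p.1 p.2 := (Finset.mem_filter.1 hp).2
    rw [Finset.mem_union, Finset.mem_union]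
    rcases h with h | h | h
    · exact Or.inl (Finset.mem_image.2 ⟨p.1, Finset.mem_Icc.2 ⟨h.2.1, h.2.2⟩,
        by rw [← h.1]⟩)
    · exact Or.inr (Or.inl (Finset.mem_image.2 ⟨p.2, Finset.mem_Icc.2 ⟨h.2.1, h.2.2⟩,
        by rw [← h.1]⟩))
    · refine Or.inr (Or.inr (Finset.mem_image.2 ⟨p.1, Finset.mem_Icc.2 ⟨h.2.1, h.2.2⟩, ?_⟩))
      have h2 : -p.1 = p.2 := by omega
      rw [h2]
  calc (SPfin L).card ≤ _ := Finset.card_le_card hsub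
    _ ≤ _ := Finset.card_union_le _ _
    _ ≤ (Finset.Icc (-8 * (L : ℤ)) (4 * L)).card +
        ((Finset.Icc (-8 * (L : ℤ)) (4 * L)).card + (Finset.Icc (-6 * (L : ℤ)) (6 * L)).card) := by
        gcongr
        · exact Finset.card_image_le
        · calc _ ≤ _ := Finset.card_union_le _ _
            _ ≤ _ := by gcongr <;> exact Finset.card_image_le
    _ ≤ 3 * (12 * L + 1) := by rw [Int.card_Icc, Int.card_Icc]; omega

/-- Every noise factor for the value `1` is at least `ε`. -/
lemma noise_ge {ε : ℝ} (hε1 : ε ≤ 1) (v : Bool) :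
    ENNReal.ofReal ε ≤ noiseProb ε v true := by
  cases v
  · simp [noiseProb]
  · simpa [noiseProb] using ENNReal.ofReal_le_one.2 hε1

/-- every invariant probability measure of the NEC automaton with one-sided
noise `ε` satisfies `μ(1_{S_{(−L,−L),L}}) ≥ μ(1_{SP_{(0,0),L}}) ≥ ε^{3(12L+1)}`. -/
theorem stmt12 (ε : ℝ) (hε : 0 < ε) (hε1 : ε ≤ 1)
    (μ : Measure (ℤ × ℤ → Bool)) (hprob : IsProbabilityMeasure μ)
    (hinv : Invariant ε Dnec μ) (L : ℕ) (hL : 1 ≤ L) :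
    μ (ones (SP L)) ≤
        μ (ones {p : ℤ × ℤ |
          Real.sqrt (((p.1 : ℝ) + L) ^ 2 + ((p.2 : ℝ) + L) ^ 2) ≤ L}) ∧
      ENNReal.ofReal ε ^ (3 * (12 * L + 1)) ≤ μ (ones (SP L)) := by
  constructor
  · -- part 1: erosion
    refine le_trans (chain hinv L (4 * L - 1) (by omega)) (measure_mono ?_)
    intro x hx p hp
    exact hx p (mem_Λfin.2 (ball_subset L hL p hp))
  · -- part 2: the direct lower bound from the cylinder formula
    have hstep : μ (ones (SP L))
        = ∫⁻ x, ∏ i ∈ SPfin L, noiseProb ε (Dnec x i) true ∂μ := by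
      rw [← coe_SPfin L]
      exact hinv (SPfin L) (fun _ => true)
    calc ENNReal.ofReal ε ^ (3 * (12 * L + 1))
        ≤ ENNReal.ofReal ε ^ (SPfin L).card :=
          pow_le_pow_of_le_one zero_le (ENNReal.ofReal_le_one.2 hε1) (card_SPfin L)
      _ = ∫⁻ _, ENNReal.ofReal ε ^ (SPfin L).card ∂μ := by
          rw [lintegral_const, measure_univ, mul_one]
      _ ≤ ∫⁻ x, ∏ i ∈ SPfin L, noiseProb ε (Dnec x i) true ∂μ := by
          refine lintegral_mono fun x => ?_
          rw [← Finset.prod_const]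
          exact Finset.prod_le_prod' (fun i _ => noise_ge hε1 _)
      _ = μ (ones (SP L)) := hstep.symm

end CAPaper
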